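/- For every (a, b, c) ∈ ℝ³ with c > √(a² + b²), there exists a continuous nonnegative function f on [0, 2π] such that ∫₀^{2π} f(t)cos t dt = a, ∫₀^{2π} f(t)sin t dt = b, and ∫₀^{2π} f(t) dt = c. -/

import Mathlib

open Real intervalIntegral

noncomputable def Jaux (n : ℕ) : ℝ := ∫ t in (0:ℝ)..(2*π), (1 + Real.cos t)^n

lemma cont_aux (n : ℕ) : Continuous (fun t => (1 + Real.cos t)^n) :=
  (continuous_const.add Real.continuous_cos).pow n

lemma S_aux (n : ℕ) : (∫ t in (0:ℝ)..(2*π), (1 + Real.cos t)^n * Real.sin t) = 0 := by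
  have hderiv : ∀ t ∈ Set.uIcc (0:ℝ) (2*π),
      HasDerivAt (fun t => -(1 + Real.cos t)^(n+1) / (n+1))
        ((1 + Real.cos t)^n * Real.sin t) t := by
    intro t _
    have h1 : HasDerivAt (fun t => 1 + Real.cos t) (-Real.sin t) t :=
      (Real.hasDerivAt_cos t).const_add 1
    have h2 := (h1.pow (n+1)).neg.div_const ((n:ℝ)+1)
    refine h2.congr_deriv ?_
    symm
    rw [Nat.add_sub_cancel]; push_cast
    have : ((n:ℝ)+1) ≠ 0 := by positivity
    field_simp
  have := intervalIntegral.integral_eq_sub_of_hasDerivAt hderiv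
    (((cont_aux n).mul Real.continuous_sin).intervalIntegrable _ _)
  simp [Real.cos_two_pi] at this
  rw [this]

lemma K_aux (n : ℕ) : (∫ t in (0:ℝ)..(2*π), (1 + Real.cos t)^(n+1) * Real.cos t)
    = ((n+1 : ℝ)/(n+2)) * Jaux (n+1) := by
  have hderiv : ∀ t ∈ Set.uIcc (0:ℝ) (2*π),
      HasDerivAt (fun t => (1 + Real.cos t)^(n+1) * Real.sin t)
        ((n+2 : ℝ) * ((1 + Real.cos t)^(n+1) * Real.cos t) - (n+1 : ℝ) * (1 + Real.cos t)^(n+1)) t := by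
    intro t _
    have h1 : HasDerivAt (fun t => 1 + Real.cos t) (-Real.sin t) t :=
      (Real.hasDerivAt_cos t).const_add 1
    have h2 := (h1.pow (n+1)).mul (Real.hasDerivAt_sin t)
    refine h2.congr_deriv ?_
    symm
    simp only [Pi.pow_apply]
    have hs : Real.sin t ^ 2 = 1 - Real.cos t ^ 2 := Real.sin_sq t
    have hp : (1 + Real.cos t)^(n+1) = (1 + Real.cos t)^n * (1 + Real.cos t) := pow_succ _ _
    push_cast
    linear_combination ((n:ℝ)+1)*(1+Real.cos t)^n * hs + ((n:ℝ)+1)*(Real.cos t - 1)*hp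
  have hint : IntervalIntegrable (fun t => (n+2 : ℝ) * ((1 + Real.cos t)^(n+1) * Real.cos t) - (n+1 : ℝ) * (1 + Real.cos t)^(n+1)) MeasureTheory.volume 0 (2*π) := by
    apply Continuous.intervalIntegrable
    continuity
  have := intervalIntegral.integral_eq_sub_of_hasDerivAt hderiv hint
  simp only [Real.sin_two_pi, Real.sin_zero, mul_zero, sub_zero, sub_self] at this
  rw [intervalIntegral.integral_sub, intervalIntegral.integral_const_mul, intervalIntegral.integral_const_mul] at this
  · have h2 : ((n:ℝ)+2) ≠ 0 := by positivity
    have : ((n:ℝ)+2) * (∫ t in (0:ℝ)..(2*π), (1 + Real.cos t)^(n+1) * Real.cos t)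
        = ((n:ℝ)+1) * Jaux (n+1) := by
      rw [Jaux]; linarith [this]
    rw [div_mul_eq_mul_div, eq_div_iff h2]
    linarith [this]
  · exact (continuous_const.mul ((cont_aux (n+1)).mul Real.continuous_cos)).intervalIntegrable _ _
  · exact (continuous_const.mul (cont_aux (n+1))).intervalIntegrable _ _

lemma J_pos (n : ℕ) : 0 < Jaux n := by
  rw [Jaux]
  have hsplit : (∫ t in (0:ℝ)..(2*π), (1 + Real.cos t)^n)
      = (∫ t in (0:ℝ)..π, (1 + Real.cos t)^n) + ∫ t in (π:ℝ)..(2*π), (1 + Real.cos t)^n := by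
    rw [intervalIntegral.integral_add_adjacent_intervals] <;>
      exact (cont_aux n).intervalIntegrable _ _
  rw [hsplit]
  have h1 : 0 < ∫ t in (0:ℝ)..π, (1 + Real.cos t)^n := by
    apply intervalIntegral.intervalIntegral_pos_of_pos_on ((cont_aux n).intervalIntegrable _ _)
    · intro x hx
      have hc : Real.cos π < Real.cos x :=
        Real.cos_lt_cos_of_nonneg_of_le_pi hx.1.le le_rfl hx.2
      rw [Real.cos_pi] at hc
      have h0 : 0 < 1 + Real.cos x := by linarith
      exact pow_pos h0 n
    · exact Real.pi_pos
  have h2 : 0 ≤ ∫ t in (π:ℝ)..(2*π), (1 + Real.cos t)^n := by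
    apply intervalIntegral.integral_nonneg
    · linarith [Real.pi_pos]
    · intro u _
      exact pow_nonneg (by linarith [Real.neg_one_le_cos u]) n
  linarith

lemma shift_int (g : ℝ → ℝ) (hg : Function.Periodic g (2*π)) (θ : ℝ) :
    (∫ t in (0:ℝ)..(2*π), g (t - θ)) = ∫ t in (0:ℝ)..(2*π), g t := by
  rw [intervalIntegral.integral_comp_sub_right]
  rw [show (0:ℝ)-θ = -θ by ring, show 2*π-θ = -θ + 2*π by ring]
  simpa using hg.intervalIntegral_add_eq (-θ) 0

lemma per_p (N : ℕ) : Function.Periodic (fun s => (1+Real.cos s)^N) (2*π) := by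
  intro s; simp [Real.cos_add_two_pi]

lemma per_u (N : ℕ) : Function.Periodic (fun s => (1+Real.cos s)^N * Real.cos s) (2*π) := by
  intro s; simp [Real.cos_add_two_pi]

lemma per_v (N : ℕ) : Function.Periodic (fun s => (1+Real.cos s)^N * Real.sin s) (2*π) := by
  intro s; simp [Real.cos_add_two_pi, Real.sin_add_two_pi]

lemma mom0 (N : ℕ) (θ : ℝ) :
    (∫ t in (0:ℝ)..(2*π), (1+Real.cos (t-θ))^N) = Jaux N :=
  shift_int _ (per_p N) θ

lemma mom_cos (N : ℕ) (θ : ℝ) :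
    (∫ t in (0:ℝ)..(2*π), (1+Real.cos (t-θ))^(N+1) * Real.cos t)
      = Real.cos θ * (((N+1:ℝ)/(N+2)) * Jaux (N+1)) := by
  have heq : ∀ t : ℝ, (1+Real.cos (t-θ))^(N+1) * Real.cos t
      = Real.cos θ * ((1+Real.cos (t-θ))^(N+1) * Real.cos (t-θ))
        - Real.sin θ * ((1+Real.cos (t-θ))^(N+1) * Real.sin (t-θ)) := by
    intro t
    have : Real.cos t = Real.cos ((t-θ)+θ) := by ring_nf
    rw [this, Real.cos_add]; ring
  simp_rw [heq]
  rw [intervalIntegral.integral_sub, intervalIntegral.integral_const_mul,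
    intervalIntegral.integral_const_mul]
  · rw [shift_int _ (per_u (N+1)) θ, shift_int _ (per_v (N+1)) θ, K_aux N, S_aux (N+1)]
    ring
  · exact (Continuous.intervalIntegrable (by continuity) _ _)
  · exact (Continuous.intervalIntegrable (by continuity) _ _)

lemma mom_sin (N : ℕ) (θ : ℝ) :
    (∫ t in (0:ℝ)..(2*π), (1+Real.cos (t-θ))^(N+1) * Real.sin t)
      = Real.sin θ * (((N+1:ℝ)/(N+2)) * Jaux (N+1)) := by
  have heq : ∀ t : ℝ, (1+Real.cos (t-θ))^(N+1) * Real.sin t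
      = Real.sin θ * ((1+Real.cos (t-θ))^(N+1) * Real.cos (t-θ))
        + Real.cos θ * ((1+Real.cos (t-θ))^(N+1) * Real.sin (t-θ)) := by
    intro t
    have : Real.sin t = Real.sin ((t-θ)+θ) := by ring_nf
    rw [this, Real.sin_add]; ring
  simp_rw [heq]
  rw [intervalIntegral.integral_add, intervalIntegral.integral_const_mul,
    intervalIntegral.integral_const_mul]
  · rw [shift_int _ (per_u (N+1)) θ, shift_int _ (per_v (N+1)) θ, K_aux N, S_aux (N+1)]
    ring
  · exact (Continuous.intervalIntegrable (by continuity) _ _)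
  · exact (Continuous.intervalIntegrable (by continuity) _ _)

theorem exists_nonneg_with_moments (a b c : ℝ) (h : Real.sqrt (a ^ 2 + b ^ 2) < c) :
    ∃ f : ℝ → ℝ, ContinuousOn f (Set.Icc (0 : ℝ) (2 * Real.pi)) ∧
      (∀ t ∈ Set.Icc (0 : ℝ) (2 * Real.pi), 0 ≤ f t) ∧
      (∫ t in (0 : ℝ)..(2 * Real.pi), f t * Real.cos t) = a ∧
      (∫ t in (0 : ℝ)..(2 * Real.pi), f t * Real.sin t) = b ∧
      (∫ t in (0 : ℝ)..(2 * Real.pi), f t) = c := by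
  set R := Real.sqrt (a ^ 2 + b ^ 2) with hRdef
  have hR0 : 0 ≤ R := Real.sqrt_nonneg _
  have hpi : (0:ℝ) < π := Real.pi_pos
  rcases eq_or_lt_of_le hR0 with hR | hR
  · -- R = 0 : a = b = 0, take constant function
    have hsq : a ^ 2 + b ^ 2 = 0 := by
      rw [← Real.sq_sqrt (by positivity : (0:ℝ) ≤ a ^ 2 + b ^ 2), ← hRdef, ← hR]; ring
    have ha : a = 0 := by nlinarith [sq_nonneg a, sq_nonneg b]
    have hb : b = 0 := by nlinarith [sq_nonneg a, sq_nonneg b]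
    have hc : 0 < c := by rw [← hR] at h; exact h
    refine ⟨fun _ => c / (2 * π), continuous_const.continuousOn, ?_, ?_, ?_, ?_⟩
    · intro t _; positivity
    · rw [intervalIntegral.integral_const_mul, integral_cos]
      simp [Real.sin_two_pi, ha]
    · rw [intervalIntegral.integral_const_mul, integral_sin]
      simp [Real.cos_two_pi, hb]
    · rw [intervalIntegral.integral_const]
      simp only [sub_zero, smul_eq_mul]
      field_simp
  · -- R > 0
    have hc : 0 < c := lt_trans hR h
    have hcR : 0 < c - R := by linarith
    set m : ℕ := ⌈R / (c - R)⌉₊ with hm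
    have hNge : R / (c - R) ≤ ((m:ℝ) + 1) := by
      calc R / (c - R) ≤ (m:ℝ) := Nat.le_ceil _
        _ ≤ (m:ℝ) + 1 := by linarith
    have hRN : R * ((m:ℝ) + 2) ≤ c * ((m:ℝ) + 1) := by
      have h1 : R ≤ ((m:ℝ) + 1) * (c - R) := (div_le_iff₀ hcR).mp hNge
      nlinarith
    set z : ℂ := a + b * Complex.I with hz
    have habs : ‖z‖ = R := by rw [hz, Complex.norm_add_mul_I, hRdef]
    have hz0 : z ≠ 0 := by
      intro h0; rw [h0, norm_zero] at habs; exact hR.ne habs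
    set θ := Complex.arg z with hθ
    have hcos : Real.cos θ = a / R := by
      rw [hθ, Complex.cos_arg hz0, habs, hz]; simp
    have hsin : Real.sin θ = b / R := by
      rw [hθ, Complex.sin_arg, habs, hz]; simp
    set J : ℝ := Jaux (m + 1) with hJ
    have hJpos : 0 < J := J_pos (m + 1)
    set ρ : ℝ := ((m + 1 : ℝ) / (m + 2)) * J with hρ
    have hρpos : 0 < ρ := by
      apply mul_pos _ hJpos
      positivity
    set A : ℝ := R / ρ with hA
    have hApos : 0 < A := div_pos hR hρpos
    set B : ℝ := (c - R * ((m:ℝ) + 2) / ((m:ℝ) + 1)) / (2 * π) with hB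
    have hBnn : 0 ≤ B := by
      apply div_nonneg _ (by positivity)
      rw [sub_nonneg, div_le_iff₀ (by positivity : (0:ℝ) < (m:ℝ) + 1)]
      linarith
    have hcp : Continuous (fun t => (1 + Real.cos (t - θ)) ^ (m + 1)) :=
      (continuous_const.add (Real.continuous_cos.comp (continuous_id.sub continuous_const))).pow _
    have hcf : Continuous (fun t => A * (1 + Real.cos (t - θ)) ^ (m + 1) + B) :=
      (continuous_const.mul hcp).add continuous_const
    refine ⟨fun t => A * (1 + Real.cos (t - θ)) ^ (m + 1) + B, ?_, ?_, ?_, ?_, ?_⟩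
    · exact hcf.continuousOn
    · intro t _
      have h1 : (0:ℝ) ≤ 1 + Real.cos (t - θ) := by linarith [Real.neg_one_le_cos (t - θ)]
      have := pow_nonneg h1 (m + 1)
      positivity
    · have heq : ∀ t : ℝ, (A * (1 + Real.cos (t - θ)) ^ (m + 1) + B) * Real.cos t
          = A * ((1 + Real.cos (t - θ)) ^ (m + 1) * Real.cos t) + B * Real.cos t := by
        intro t; ring
      simp_rw [heq]
      rw [intervalIntegral.integral_add (f := fun t => A * ((1 + Real.cos (t - θ)) ^ (m + 1) * Real.cos t)) (g := fun t => B * Real.cos t)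
        (((continuous_const.mul (hcp.mul Real.continuous_cos)).intervalIntegrable _ _))
        (((continuous_const.mul Real.continuous_cos).intervalIntegrable _ _)),
        intervalIntegral.integral_const_mul, intervalIntegral.integral_const_mul,
        mom_cos m θ, integral_cos, hcos]
      simp only [Real.sin_two_pi, Real.sin_zero, sub_zero, mul_zero, add_zero]
      rw [hA, ← hρ]
      field_simp
    · have heq : ∀ t : ℝ, (A * (1 + Real.cos (t - θ)) ^ (m + 1) + B) * Real.sin t
          = A * ((1 + Real.cos (t - θ)) ^ (m + 1) * Real.sin t) + B * Real.sin t := by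
        intro t; ring
      simp_rw [heq]
      rw [intervalIntegral.integral_add (f := fun t => A * ((1 + Real.cos (t - θ)) ^ (m + 1) * Real.sin t)) (g := fun t => B * Real.sin t)
        (((continuous_const.mul (hcp.mul Real.continuous_sin)).intervalIntegrable _ _))
        (((continuous_const.mul Real.continuous_sin).intervalIntegrable _ _)),
        intervalIntegral.integral_const_mul, intervalIntegral.integral_const_mul,
        mom_sin m θ, integral_sin, hsin]
      simp only [Real.cos_two_pi, Real.cos_zero, sub_self, mul_zero, add_zero]
      rw [hA, ← hρ]
      field_simp
    · rw [intervalIntegral.integral_add (f := fun t => A * (1 + Real.cos (t - θ)) ^ (m + 1)) (g := fun _ => B)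
        (((continuous_const.mul hcp).intervalIntegrable _ _))
        ((continuous_const.intervalIntegrable _ _)),
        intervalIntegral.integral_const_mul, mom0 (m + 1) θ,
        intervalIntegral.integral_const]
      rw [← hJ, hA, hρ, hB]
      have hm1 : ((m:ℝ) + 1) ≠ 0 := by positivity
      have hm2 : ((m:ℝ) + 2) ≠ 0 := by positivity
      have hπ : (2 * π) ≠ 0 := by positivity
      rw [smul_eq_mul]
      field_simp
      ring
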